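/- (Decomposition of suboptimality for robust MDP) Let Q̂_h : S × A → ℝ (h ∈ {1,…,H}) be arbitrary functions, let π̂ be a Markov policy, set V̂_{H+1} ≡ 0 and V̂_h(s) = ∑_a π̂_h(a|s) Q̂_h(s,a), and define the model evaluation error ι_h(s,a) = (𝔹_h V̂_{h+1})(s,a) − Q̂_h(s,a). Let π* be a robust optimal Markov policy. Then for every s ∈ S there exist kernel sequences P^♮, P^†, P^‡, each a tuple (P_1,…,P_H) with P_h ∈ 𝒫_h for all h, such that SubOpt(π̂; s) ≤ −∑_{h=1}^H E^{π̂,P^♮}[ι_h(s_h,a_h) | s_1 = s] + ∑_{h=1}^H E^{π*,P^†}[ι_h(s_h,a_h) | s_1 = s] + ∑_{h=1}^H E^{π*,P^‡}[ ∑_{a∈A} Q̂_h(s_h,a)(π*_h(a|s_h) − π̂_h(a|s_h)) | s_1 = s ]. -/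

import Mathlib

open scoped BigOperators
open MeasureTheory

noncomputable section

/-- The probability simplex `Δ^{K-1} ⊆ ℝ^K`. -/
def probSimplex (K : ℕ) : Set (Fin K → ℝ) :=
  {α | (∀ k, 0 ≤ α k) ∧ ∑ k, α k = 1}

/-- Data of a group-linear DRMDP: shared simplex features `φ`, and for every step `h`,
coordinate `i` and site `k`, a reward factor `θ h i k ∈ [0,1]` and a probability
mass function `μ h i k` on the (finite) state space `S`. -/
structure DRMDP (S A : Type) [Fintype S] (H K d : ℕ) where
  φ : S → A → Fin d → ℝ
  φ_nonneg : ∀ s a i, 0 ≤ φ s a i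
  φ_sum : ∀ s a, ∑ i, φ s a i = 1
  θ : Fin H → Fin d → Fin K → ℝ
  θ_nonneg : ∀ h i k, 0 ≤ θ h i k
  θ_le_one : ∀ h i k, θ h i k ≤ 1
  μ : Fin H → Fin d → Fin K → S → ℝ
  μ_nonneg : ∀ h i k s', 0 ≤ μ h i k s'
  μ_sum : ∀ h i k, ∑ s', μ h i k s' = 1

namespace DRMDP

variable {S A : Type} [Fintype S] [Fintype A] {H K d : ℕ}

/-- Site-`k` transition kernel `P_h^k(s'|s,a) = ∑_i φ_i(s,a) μ_{h,i}^k(s')`. -/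
def Pk (M : DRMDP S A H K d) (h : Fin H) (k : Fin K) (s : S) (a : A) (s' : S) : ℝ :=
  ∑ i, M.φ s a i * M.μ h i k s'

/-- Site-`k` expected reward `r_h^k(s,a) = ∑_i φ_i(s,a) θ_{h,i}^k`. -/
def rk (M : DRMDP S A H K d) (h : Fin H) (k : Fin K) (s : S) (a : A) : ℝ :=
  ∑ i, M.φ s a i * M.θ h i k

/-- Membership `(P,r) ∈ U_h` in the d-rectangular feature-wise cross-site
convex-hull uncertainty set. -/
def inU (M : DRMDP S A H K d) (h : Fin H) (P : S → A → S → ℝ) (r : S → A → ℝ) : Prop :=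
  ∃ α : Fin d → Fin K → ℝ,
    (∀ i, α i ∈ probSimplex K) ∧
    (∀ s a, r s a = ∑ i, M.φ s a i * ∑ k, α i k * M.θ h i k) ∧
    (∀ s a s', P s a s' = ∑ i, M.φ s a i * ∑ k, α i k * M.μ h i k s')

/-- Membership `P ∈ 𝒫_h` (the transition kernels appearing in `U_h`). -/
def inP (M : DRMDP S A H K d) (h : Fin H) (P : S → A → S → ℝ) : Prop :=
  ∃ r, M.inU h P r

/-- The robust Bellman operator
`(𝔹_h V)(s,a) = inf_{(P,r) ∈ U_h} [ r(s,a) + ∑_{s'} P(s'|s,a) V(s') ]`. -/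
def bellman (M : DRMDP S A H K d) (h : Fin H) (V : S → ℝ) (s : S) (a : A) : ℝ :=
  sInf {x | ∃ P r, M.inU h P r ∧ x = r s a + ∑ s', P s a s' * V s'}

end DRMDP

/-- A Markov (possibly randomized) policy: `π h (·|s)` is a pmf on the actions. -/
def IsPolicy {S A : Type} [Fintype A] (H : ℕ) (π : Fin H → S → A → ℝ) : Prop :=
  ∀ h s, (∀ a, 0 ≤ π h s a) ∧ ∑ a, π h s a = 1

/-- `cumW H π P r t s` is the expected cumulative reward `W_t(s)` from (0-indexed)
step `t` on, under policy `π` and model sequence `(P,r)`; `W_t ≡ 0` for `t ≥ H`. -/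
def cumW {S A : Type} [Fintype S] [Fintype A] (H : ℕ)
    (π : Fin H → S → A → ℝ) (P : Fin H → S → A → S → ℝ) (r : Fin H → S → A → ℝ) :
    ℕ → S → ℝ
  | t =>
    if ht : t < H then
      fun s => ∑ a, π ⟨t, ht⟩ s a *
        (r ⟨t, ht⟩ s a + ∑ s', P ⟨t, ht⟩ s a s' * cumW H π P r (t + 1) s')
    else fun _ => 0
  termination_by t => H - t
  decreasing_by omega

namespace DRMDP

variable {S A : Type} [Fintype S] [Fintype A] {H K d : ℕ}

/-- Robust value function `V_t^π(s)`: worst case of `W_t(s)` over model sequences in `∏ U_h`. -/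
def robustV (M : DRMDP S A H K d) (π : Fin H → S → A → ℝ) (t : ℕ) (s : S) : ℝ :=
  sInf {x | ∃ P r, (∀ h : Fin H, M.inU h (P h) (r h)) ∧ x = cumW H π P r t s}

/-- Robust Q-function `Q_h^π(s,a)`. -/
def robustQ (M : DRMDP S A H K d) (π : Fin H → S → A → ℝ) (h : Fin H) (s : S) (a : A) : ℝ :=
  sInf {x | ∃ P r, (∀ t : Fin H, M.inU t (P t) (r t)) ∧
    x = r h s a + ∑ s', P h s a s' * cumW H π P r ((h : ℕ) + 1) s'}

/-- `πs` is a robust optimal Markov policy. -/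
def IsOptimalRobust (M : DRMDP S A H K d) (πs : Fin H → S → A → ℝ) : Prop :=
  IsPolicy H πs ∧ ∀ π, IsPolicy H π → ∀ (h : Fin H) (s : S),
    M.robustV π (h : ℕ) s ≤ M.robustV πs (h : ℕ) s

end DRMDP

/-- Step-`t` state distribution of the Markov chain started at `s₁`, following
policy `π` and transition kernels `P`. -/
def visit {S A : Type} [Fintype S] [Fintype A] [DecidableEq S] (H : ℕ)
    (π : Fin H → S → A → ℝ) (P : Fin H → S → A → S → ℝ) (s₁ : S) : ℕ → S → ℝ
  | 0 => fun s => if s = s₁ then 1 else 0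
  | t + 1 => fun s' =>
      if ht : t < H then
        ∑ s, ∑ a, visit H π P s₁ t s * π ⟨t, ht⟩ s a * P ⟨t, ht⟩ s a s'
      else 0

/-- `E^{π,P}[ f(s_h, a_h) | s_1 = s₁ ]` (0-indexed step `h`). -/
def expAt {S A : Type} [Fintype S] [Fintype A] [DecidableEq S] (H : ℕ)
    (π : Fin H → S → A → ℝ) (P : Fin H → S → A → S → ℝ) (s₁ : S)
    (h : Fin H) (f : S → A → ℝ) : ℝ :=
  ∑ s, ∑ a, visit H π P s₁ (h : ℕ) s * π h s a * f s a


section Aux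
variable {S A : Type} [Fintype S] [Fintype A] {H K d : ℕ}

lemma cumW_of_lt (π : Fin H → S → A → ℝ) (P : Fin H → S → A → S → ℝ)
    (r : Fin H → S → A → ℝ) {t : ℕ} (ht : t < H) (s : S) :
    cumW H π P r t s = ∑ a, π ⟨t, ht⟩ s a *
      (r ⟨t, ht⟩ s a + ∑ s', P ⟨t, ht⟩ s a s' * cumW H π P r (t + 1) s') := by
  rw [cumW]; simp [ht]

lemma cumW_of_ge (π : Fin H → S → A → ℝ) (P : Fin H → S → A → S → ℝ)
    (r : Fin H → S → A → ℝ) {t : ℕ} (ht : H ≤ t) (s : S) :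
    cumW H π P r t s = 0 := by
  rw [cumW]; simp [Nat.not_lt.mpr ht]

variable [DecidableEq S]

lemma visit_zero (π : Fin H → S → A → ℝ) (P : Fin H → S → A → S → ℝ) (s₁ s : S) :
    visit H π P s₁ 0 s = if s = s₁ then 1 else 0 := rfl

lemma visit_succ (π : Fin H → S → A → ℝ) (P : Fin H → S → A → S → ℝ) (s₁ : S)
    {t : ℕ} (ht : t < H) (s' : S) :
    visit H π P s₁ (t+1) s' = ∑ s, ∑ a, visit H π P s₁ t s * π ⟨t, ht⟩ s a * P ⟨t, ht⟩ s a s' := by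
  simp [visit, ht]

end Aux
set_option linter.unusedSectionVars false
namespace DRMDP
variable {S A : Type} [Fintype S] [Fintype A] {H K d : ℕ}

lemma model_val (M : DRMDP S A H K d) (h : Fin H) (α : Fin d → Fin K → ℝ)
    (V : S → ℝ) (s : S) (a : A) :
    (∑ i, M.φ s a i * ∑ k, α i k * M.θ h i k)
      + ∑ s', (∑ i, M.φ s a i * ∑ k, α i k * M.μ h i k s') * V s'
    = ∑ i, M.φ s a i * ∑ k, α i k * (M.θ h i k + ∑ s', M.μ h i k s' * V s') := by
  have hswap : ∑ s', (∑ i, M.φ s a i * ∑ k, α i k * M.μ h i k s') * V s'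
      = ∑ i, M.φ s a i * ∑ k, α i k * ∑ s', M.μ h i k s' * V s' := by
    simp only [Finset.sum_mul]
    rw [Finset.sum_comm]
    refine Finset.sum_congr rfl fun i _ => ?_
    simp only [Finset.mul_sum, Finset.sum_mul]
    rw [Finset.sum_comm]
    exact Finset.sum_congr rfl fun k _ => Finset.sum_congr rfl fun s' _ => by ring
  rw [hswap, ← Finset.sum_add_distrib]
  refine Finset.sum_congr rfl fun i _ => ?_
  rw [← mul_add, ← Finset.sum_add_distrib]
  refine congrArg _ (Finset.sum_congr rfl fun k _ => by ring)

lemma bellman_spec (hK : 1 ≤ K) (M : DRMDP S A H K d) (h : Fin H) (V : S → ℝ) :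
    ∃ P r, M.inU h P r ∧ (∀ s a, M.bellman h V s a = r s a + ∑ s', P s a s' * V s')
      ∧ ∀ P' r', M.inU h P' r' → ∀ s a,
          M.bellman h V s a ≤ r' s a + ∑ s', P' s a s' * V s' := by
  haveI : Nonempty (Fin K) := ⟨⟨0, hK⟩⟩
  set c : Fin d → Fin K → ℝ := fun i k => M.θ h i k + ∑ s', M.μ h i k s' * V s' with hc
  choose kst hkmem hkst using fun i =>
    Finset.exists_min_image Finset.univ (c i) ⟨Classical.arbitrary _, Finset.mem_univ _⟩
  set α0 : Fin d → Fin K → ℝ := fun i k => if k = kst i then 1 else 0 with hα0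
  have hα0mem : ∀ i, α0 i ∈ probSimplex K := by
    intro i
    constructor
    · intro k; by_cases hk : k = kst i <;> simp [hα0, hk]
    · simp [hα0]
  set P0 : S → A → S → ℝ := fun s a s' => ∑ i, M.φ s a i * ∑ k, α0 i k * M.μ h i k s' with hP0
  set r0 : S → A → ℝ := fun s a => ∑ i, M.φ s a i * ∑ k, α0 i k * M.θ h i k with hr0
  have hU0 : M.inU h P0 r0 := ⟨α0, hα0mem, fun s a => rfl, fun s a s' => rfl⟩
  have hval0 : ∀ s a, r0 s a + ∑ s', P0 s a s' * V s' = ∑ i, M.φ s a i * c i (kst i) := by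
    intro s a
    rw [model_val M h α0 V s a]
    refine Finset.sum_congr rfl fun i _ => congrArg _ ?_
    simp [hα0, hc]
  have hlow : ∀ P' r', M.inU h P' r' → ∀ s a,
      (∑ i, M.φ s a i * c i (kst i)) ≤ r' s a + ∑ s', P' s a s' * V s' := by
    rintro P' r' ⟨α, hα, hr', hP'⟩ s a
    have : r' s a + ∑ s', P' s a s' * V s'
        = ∑ i, M.φ s a i * ∑ k, α i k * c i k := by
      rw [hr' s a]
      have := model_val M h α V s a
      rw [← this]
      congr 1
      exact Finset.sum_congr rfl fun s' _ => by rw [hP' s a s']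
    rw [this]
    refine Finset.sum_le_sum fun i _ => mul_le_mul_of_nonneg_left ?_ (M.φ_nonneg s a i)
    calc c i (kst i) = ∑ k, α i k * c i (kst i) := by
          rw [← Finset.sum_mul, (hα i).2, one_mul]
      _ ≤ ∑ k, α i k * c i k :=
          Finset.sum_le_sum fun k _ =>
            mul_le_mul_of_nonneg_left (hkst i k (Finset.mem_univ k)) ((hα i).1 k)
  have hbell : ∀ s a, M.bellman h V s a = ∑ i, M.φ s a i * c i (kst i) := by
    intro s a
    have hmem : (r0 s a + ∑ s', P0 s a s' * V s')
        ∈ {x | ∃ P r, M.inU h P r ∧ x = r s a + ∑ s', P s a s' * V s'} :=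
      ⟨P0, r0, hU0, rfl⟩
    have hbdd : BddBelow {x | ∃ P r, M.inU h P r ∧ x = r s a + ∑ s', P s a s' * V s'} :=
      ⟨∑ i, M.φ s a i * c i (kst i), by
        rintro x ⟨P', r', hU', rfl⟩; exact hlow P' r' hU' s a⟩
    refine le_antisymm ((csInf_le hbdd hmem).trans_eq (hval0 s a)) ?_
    refine le_csInf ⟨_, hmem⟩ ?_
    rintro x ⟨P', r', hU', rfl⟩
    exact hlow P' r' hU' s a
  exact ⟨P0, r0, hU0, fun s a => by rw [hbell s a, ← hval0 s a],
    fun P' r' hU' s a => (hbell s a) ▸ hlow P' r' hU' s a⟩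
end DRMDP
namespace DRMDP
variable {S A : Type} [Fintype S] [Fintype A] {H K d : ℕ}

lemma inU_r_nonneg {M : DRMDP S A H K d} {h : Fin H} {P r} (hU : M.inU h P r)
    (s : S) (a : A) : 0 ≤ r s a := by
  obtain ⟨α, hα, hr, -⟩ := hU
  rw [hr s a]
  refine Finset.sum_nonneg fun i _ => mul_nonneg (M.φ_nonneg s a i) ?_
  exact Finset.sum_nonneg fun k _ => mul_nonneg ((hα i).1 k) (M.θ_nonneg h i k)

lemma inU_P_nonneg {M : DRMDP S A H K d} {h : Fin H} {P r} (hU : M.inU h P r)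
    (s : S) (a : A) (s' : S) : 0 ≤ P s a s' := by
  obtain ⟨α, hα, -, hP⟩ := hU
  rw [hP s a s']
  refine Finset.sum_nonneg fun i _ => mul_nonneg (M.φ_nonneg s a i) ?_
  exact Finset.sum_nonneg fun k _ => mul_nonneg ((hα i).1 k) (M.μ_nonneg h i k s')

lemma cumW_nonneg {π : Fin H → S → A → ℝ} (hπ : ∀ h s a, 0 ≤ π h s a)
    {M : DRMDP S A H K d} {P : Fin H → S → A → S → ℝ} {r : Fin H → S → A → ℝ}
    (hU : ∀ h : Fin H, M.inU h (P h) (r h)) :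
    ∀ t s, 0 ≤ cumW H π P r t s := by
  suffices key : ∀ n t, H - t ≤ n → ∀ s, (0:ℝ) ≤ cumW H π P r t s by
    exact fun t s => key (H - t) t le_rfl s
  intro n
  induction n with
  | zero =>
    intro t ht s
    rw [cumW_of_ge π P r (by omega) s]
  | succ n ih =>
    intro t ht s
    by_cases htH : t < H
    · rw [cumW_of_lt π P r htH s]
      refine Finset.sum_nonneg fun a _ => mul_nonneg (hπ _ s a) (add_nonneg ?_ ?_)
      · exact inU_r_nonneg (hU _) s a
      · exact Finset.sum_nonneg fun s' _ =>
          mul_nonneg (inU_P_nonneg (hU _) s a s') (ih (t+1) (by omega) s')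
    · rw [cumW_of_ge π P r (by omega) s]

end DRMDP

section Aux2
variable {S A : Type} [Fintype S] [Fintype A] [DecidableEq S] {H : ℕ}

lemma visit_nonneg {π : Fin H → S → A → ℝ} (hπ : ∀ h s a, 0 ≤ π h s a)
    {P : Fin H → S → A → S → ℝ} (hP : ∀ h s a s', 0 ≤ P h s a s') (s₁ : S) :
    ∀ t s, 0 ≤ visit H π P s₁ t s := by
  intro t
  induction t with
  | zero => intro s; rw [visit_zero]; positivity
  | succ t ih =>
    intro s'
    by_cases ht : t < H
    · rw [visit_succ π P s₁ ht s']
      refine Finset.sum_nonneg fun s _ => Finset.sum_nonneg fun a _ =>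
        mul_nonneg (mul_nonneg (ih s) (hπ _ s a)) (hP _ s a s')
    · simp [visit, ht]

lemma telescope (π : Fin H → S → A → ℝ) (P : Fin H → S → A → S → ℝ) (s₁ : S)
    (D G : ℕ → S → ℝ)
    (hD : ∀ t (ht : t < H), ∀ s, D t s = G t s +
      ∑ a, ∑ s', π ⟨t, ht⟩ s a * P ⟨t, ht⟩ s a s' * D (t+1) s')
    (hDH : ∀ s, D H s = 0) :
    D 0 s₁ = ∑ h ∈ Finset.range H, ∑ s, visit H π P s₁ h s * G h s := by
  have key : ∀ n t, t + n = H →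
      ∑ s, visit H π P s₁ t s * D t s
        = ∑ h ∈ Finset.Ico t H, ∑ s, visit H π P s₁ h s * G h s := by
    intro n
    induction n with
    | zero =>
      intro t ht
      have : t = H := by omega
      subst this
      simp [hDH]
    | succ n ih =>
      intro t ht
      have htH : t < H := by omega
      rw [Finset.sum_eq_sum_Ico_succ_bot htH, ← ih (t+1) (by omega)]
      have hstep : ∑ s', visit H π P s₁ (t+1) s' * D (t+1) s'
          = ∑ s, visit H π P s₁ t s *
              ∑ a, ∑ s', π ⟨t, htH⟩ s a * P ⟨t, htH⟩ s a s' * D (t+1) s' := by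
        simp only [visit_succ π P s₁ htH, Finset.sum_mul, Finset.mul_sum]
        rw [Finset.sum_comm]
        refine Finset.sum_congr rfl fun s _ => ?_
        rw [Finset.sum_comm]
        exact Finset.sum_congr rfl fun a _ => Finset.sum_congr rfl fun s' _ => by ring
      rw [hstep, ← Finset.sum_add_distrib]
      refine Finset.sum_congr rfl fun s _ => ?_
      rw [hD t htH s, mul_add]
  have h0 := key H 0 (by omega)
  have : ∑ s, visit H π P s₁ 0 s * D 0 s = D 0 s₁ := by
    simp [visit_zero, Finset.sum_ite_eq']
  rw [this] at h0
  simpa using h0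

end Aux2

namespace DRMDP
variable {S A : Type} [Fintype S] [Fintype A] {H K d : ℕ}

/-- DP value of policy `π` computed with the robust Bellman operator. -/
def Vdp (M : DRMDP S A H K d) (π : Fin H → S → A → ℝ) : ℕ → S → ℝ
  | t =>
    if ht : t < H then
      fun s => ∑ a, π ⟨t, ht⟩ s a * M.bellman ⟨t, ht⟩ (Vdp M π (t+1)) s a
    else fun _ => 0
  termination_by t => H - t
  decreasing_by omega

lemma Vdp_of_lt (M : DRMDP S A H K d) (π : Fin H → S → A → ℝ) {t : ℕ} (ht : t < H) (s : S) :
    Vdp M π t s = ∑ a, π ⟨t, ht⟩ s a * M.bellman ⟨t, ht⟩ (Vdp M π (t+1)) s a := by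
  rw [Vdp]; simp [ht]

lemma Vdp_of_ge (M : DRMDP S A H K d) (π : Fin H → S → A → ℝ) {t : ℕ} (ht : H ≤ t) (s : S) :
    Vdp M π t s = 0 := by
  rw [Vdp]; simp [Nat.not_lt.mpr ht]

lemma Vdp_le_cumW (hK : 1 ≤ K) (M : DRMDP S A H K d) {π : Fin H → S → A → ℝ}
    (hπ : ∀ h s a, 0 ≤ π h s a) {P : Fin H → S → A → S → ℝ} {r : Fin H → S → A → ℝ}
    (hU : ∀ h : Fin H, M.inU h (P h) (r h)) :
    ∀ t s, Vdp M π t s ≤ cumW H π P r t s := by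
  suffices key : ∀ n t, H - t ≤ n → ∀ s, Vdp M π t s ≤ cumW H π P r t s by
    exact fun t s => key (H - t) t le_rfl s
  intro n
  induction n with
  | zero =>
    intro t ht s
    rw [Vdp_of_ge M π (by omega) s, cumW_of_ge π P r (by omega) s]
  | succ n ih =>
    intro t ht s
    by_cases htH : t < H
    · rw [Vdp_of_lt M π htH s, cumW_of_lt π P r htH s]
      refine Finset.sum_le_sum fun a _ => mul_le_mul_of_nonneg_left ?_ (hπ _ s a)
      obtain ⟨Pg, rg, hUg, hg, hle⟩ := bellman_spec hK M ⟨t, htH⟩ (Vdp M π (t+1))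
      refine (hle (P ⟨t, htH⟩) (r ⟨t, htH⟩) (hU _) s a).trans ?_
      refine add_le_add le_rfl (Finset.sum_le_sum fun s' _ => ?_)
      exact mul_le_mul_of_nonneg_left (ih (t+1) (by omega) s') (inU_P_nonneg (hU _) s a s')
    · rw [Vdp_of_ge M π (by omega) s, cumW_of_ge π P r (by omega) s]

end DRMDP
section VD
variable {S A : Type} [Fintype S] [Fintype A] [DecidableEq S] {H : ℕ}

lemma valueDiff (π πh : Fin H → S → A → ℝ) (P : Fin H → S → A → S → ℝ)
    (r : Fin H → S → A → ℝ) (Q : Fin H → S → A → ℝ) (V : ℕ → S → ℝ)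
    (hV : ∀ (t : ℕ) (ht : t < H) (s : S), V t s = ∑ a, πh ⟨t, ht⟩ s a * Q ⟨t, ht⟩ s a)
    (hV0 : ∀ t, H ≤ t → ∀ s, V t s = 0) (s₁ : S) :
    cumW H π P r 0 s₁ - V 0 s₁
      = ∑ h : Fin H, ∑ s, visit H π P s₁ (h : ℕ) s *
          ((∑ a, π h s a * (r h s a + (∑ s', P h s a s' * V ((h : ℕ)+1) s') - Q h s a))
            + ∑ a, (π h s a - πh h s a) * Q h s a) := by
  set G : ℕ → S → ℝ := fun t s =>
    if ht : t < H then
      (∑ a, π ⟨t, ht⟩ s a * (r ⟨t, ht⟩ s a + (∑ s', P ⟨t, ht⟩ s a s' * V (t+1) s') - Q ⟨t, ht⟩ s a))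
        + ∑ a, (π ⟨t, ht⟩ s a - πh ⟨t, ht⟩ s a) * Q ⟨t, ht⟩ s a
    else 0 with hG
  have hmain := telescope π P s₁ (fun t s => cumW H π P r t s - V t s) G ?_ ?_
  · rw [hmain, ← Fin.sum_univ_eq_sum_range (fun t => ∑ s, visit H π P s₁ t s * G t s) H]
    refine Finset.sum_congr rfl fun h _ => Finset.sum_congr rfl fun s _ => ?_
    simp [hG, h.isLt]
  · intro t ht s
    simp only [hG, dif_pos ht]
    rw [cumW_of_lt π P r ht s, hV t ht s]
    rw [← Finset.sum_sub_distrib, ← Finset.sum_add_distrib, ← Finset.sum_add_distrib]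
    refine Finset.sum_congr rfl fun a _ => ?_
    have hx : ∑ s', π ⟨t, ht⟩ s a * P ⟨t, ht⟩ s a s' * (cumW H π P r (t+1) s' - V (t+1) s')
        = π ⟨t, ht⟩ s a * ((∑ s', P ⟨t, ht⟩ s a s' * cumW H π P r (t+1) s')
            - ∑ s', P ⟨t, ht⟩ s a s' * V (t+1) s') := by
      rw [mul_sub, Finset.mul_sum, Finset.mul_sum, ← Finset.sum_sub_distrib]
      exact Finset.sum_congr rfl fun s' _ => by ring
    rw [hx]; ring
  · intro s
    rw [cumW_of_ge π P r le_rfl s, hV0 H le_rfl s]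
    ring

end VD
/-- Decomposition of suboptimality for the robust MDP: with model evaluation
error `ι_h = 𝔹_h V̂_{h+1} − Q̂_h` and `V̂_h(s) = ∑_a π̂_h(a|s) Q̂_h(s,a)`
(`V̂_{H+1} ≡ 0`), for every initial state there are kernel sequences
`P^♮, P^†, P^‡` in `∏_h 𝒫_h` with
`SubOpt(π̂;s) ≤ −∑_h E^{π̂,P^♮}[ι_h] + ∑_h E^{π*,P^†}[ι_h]
  + ∑_h E^{π*,P^‡}[⟨Q̂_h(s_h,·), π*_h(·|s_h) − π̂_h(·|s_h)⟩]`. -/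
theorem stmt_6 {S A : Type} [Fintype S] [Fintype A] [DecidableEq S]
    {H K d : ℕ} (hK : 1 ≤ K) (M : DRMDP S A H K d)
    (Qhat : Fin H → S → A → ℝ)
    (πhat : Fin H → S → A → ℝ) (hπhat : IsPolicy H πhat)
    (πstar : Fin H → S → A → ℝ) (hopt : M.IsOptimalRobust πstar)
    (Vhat : ℕ → S → ℝ)
    (hVhat : ∀ (t : ℕ) (ht : t < H) (s : S),
      Vhat t s = ∑ a, πhat ⟨t, ht⟩ s a * Qhat ⟨t, ht⟩ s a)
    (hVhat0 : ∀ t : ℕ, H ≤ t → ∀ s, Vhat t s = 0)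
    (ι : Fin H → S → A → ℝ)
    (hι : ∀ (h : Fin H) (s : S) (a : A),
      ι h s a = M.bellman h (Vhat ((h : ℕ) + 1)) s a - Qhat h s a)
    (s₁ : S) :
    ∃ Pn Pd Pdd : Fin H → S → A → S → ℝ,
      (∀ h : Fin H, M.inP h (Pn h)) ∧
      (∀ h : Fin H, M.inP h (Pd h)) ∧
      (∀ h : Fin H, M.inP h (Pdd h)) ∧
      M.robustV πstar 0 s₁ - M.robustV πhat 0 s₁ ≤
        -(∑ h : Fin H, expAt H πhat Pn s₁ h (fun s a => ι h s a))
        + (∑ h : Fin H, expAt H πstar Pd s₁ h (fun s a => ι h s a))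
        + ∑ h : Fin H, expAt H πstar Pdd s₁ h
            (fun s _ => ∑ a, Qhat h s a * (πstar h s a - πhat h s a)) := by
  have hπs := hopt.1
  have hπsn : ∀ h s a, 0 ≤ πstar h s a := fun h s a => (hπs h s).1 a
  have hπhn : ∀ h s a, 0 ≤ πhat h s a := fun h s a => (hπhat h s).1 a
  choose Pd rd hUd hvald hled using fun h : Fin H =>
    DRMDP.bellman_spec hK M h (Vhat ((h : ℕ) + 1))
  choose Pn rn hUn hvaln _hlen using fun h : Fin H =>
    DRMDP.bellman_spec hK M h (M.Vdp πhat ((h : ℕ) + 1))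
  have hcum_eq : ∀ t s, cumW H πhat Pn rn t s = M.Vdp πhat t s := by
    suffices key : ∀ n t, H - t ≤ n → ∀ s, cumW H πhat Pn rn t s = M.Vdp πhat t s by
      exact fun t s => key (H - t) t le_rfl s
    intro n
    induction n with
    | zero =>
      intro t ht s
      rw [cumW_of_ge _ _ _ (by omega) s, DRMDP.Vdp_of_ge M πhat (by omega) s]
    | succ n ih =>
      intro t ht s
      by_cases htH : t < H
      · rw [cumW_of_lt _ _ _ htH s, DRMDP.Vdp_of_lt M πhat htH s]
        refine Finset.sum_congr rfl fun a _ => ?_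
        congr 1
        rw [show (∑ s', Pn ⟨t, htH⟩ s a s' * cumW H πhat Pn rn (t+1) s')
            = ∑ s', Pn ⟨t, htH⟩ s a s' * M.Vdp πhat (t+1) s' from
          Finset.sum_congr rfl fun s' _ => by rw [ih (t+1) (by omega) s']]
        exact (hvaln ⟨t, htH⟩ s a).symm
      · rw [cumW_of_ge _ _ _ (by omega) s, DRMDP.Vdp_of_ge M πhat (by omega) s]
  have h2 : M.Vdp πhat 0 s₁ ≤ M.robustV πhat 0 s₁ := by
    refine le_csInf ⟨cumW H πhat Pn rn 0 s₁, Pn, rn, hUn, rfl⟩ ?_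
    rintro x ⟨P, r, hU, rfl⟩
    exact DRMDP.Vdp_le_cumW hK M hπhn hU 0 s₁
  have h3 : M.robustV πstar 0 s₁ ≤ cumW H πstar Pd rd 0 s₁ := by
    refine csInf_le ⟨0, ?_⟩ ⟨Pd, rd, hUd, rfl⟩
    rintro x ⟨P, r, hU, rfl⟩
    exact DRMDP.cumW_nonneg hπsn hU 0 s₁
  have h4 := valueDiff πstar πhat Pd rd Qhat Vhat hVhat hVhat0 s₁
  have h4' : cumW H πstar Pd rd 0 s₁ - Vhat 0 s₁
      = (∑ h : Fin H, expAt H πstar Pd s₁ h (fun s a => ι h s a))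
        + ∑ h : Fin H, expAt H πstar Pd s₁ h
            (fun s _ => ∑ a, Qhat h s a * (πstar h s a - πhat h s a)) := by
    rw [h4, ← Finset.sum_add_distrib]
    refine Finset.sum_congr rfl fun h _ => ?_
    simp only [expAt]
    rw [← Finset.sum_add_distrib]
    refine Finset.sum_congr rfl fun s _ => ?_
    rw [mul_add]
    congr 1
    · rw [Finset.mul_sum]
      refine Finset.sum_congr rfl fun a _ => ?_
      rw [hι h s a, hvald h s a]
      ring
    · have hsum : ∑ a, visit H πstar Pd s₁ (h : ℕ) s * πstar h s a *
          (∑ a', Qhat h s a' * (πstar h s a' - πhat h s a'))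
          = visit H πstar Pd s₁ (h : ℕ) s *
              ∑ a', Qhat h s a' * (πstar h s a' - πhat h s a') := by
        rw [← Finset.sum_mul, ← Finset.mul_sum, (hπs h s).2, mul_one]
      rw [hsum]
      congr 1
      exact Finset.sum_congr rfl fun a _ => by ring
  have h5 := valueDiff πhat πhat Pn rn Qhat Vhat hVhat hVhat0 s₁
  have h5' : (∑ h : Fin H, expAt H πhat Pn s₁ h (fun s a => ι h s a))
      ≤ cumW H πhat Pn rn 0 s₁ - Vhat 0 s₁ := by
    rw [h5]
    refine Finset.sum_le_sum fun h _ => ?_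
    simp only [expAt]
    refine Finset.sum_le_sum fun s _ => ?_
    have hvpos : 0 ≤ visit H πhat Pn s₁ (h : ℕ) s :=
      visit_nonneg hπhn (fun h s a s' => DRMDP.inU_P_nonneg (hUn h) s a s') s₁ _ s
    have hz : ∑ a, (πhat h s a - πhat h s a) * Qhat h s a = 0 := by simp
    rw [hz, add_zero]
    calc ∑ a, visit H πhat Pn s₁ (h : ℕ) s * πhat h s a * ι h s a
        = visit H πhat Pn s₁ (h : ℕ) s * ∑ a, πhat h s a * ι h s a := by
          rw [Finset.mul_sum]
          exact Finset.sum_congr rfl fun a _ => by ring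
      _ ≤ visit H πhat Pn s₁ (h : ℕ) s *
            ∑ a, πhat h s a * (rn h s a
              + (∑ s', Pn h s a s' * Vhat ((h : ℕ)+1) s') - Qhat h s a) := by
          refine mul_le_mul_of_nonneg_left ?_ hvpos
          refine Finset.sum_le_sum fun a _ => ?_
          refine mul_le_mul_of_nonneg_left ?_ (hπhn h s a)
          rw [hι h s a]
          have := hled h (Pn h) (rn h) (hUn h) s a
          linarith
  refine ⟨Pn, Pd, Pd, fun h => ⟨rn h, hUn h⟩, fun h => ⟨rd h, hUd h⟩,
    fun h => ⟨rd h, hUd h⟩, ?_⟩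
  have e1 : cumW H πhat Pn rn 0 s₁ = M.Vdp πhat 0 s₁ := hcum_eq 0 s₁
  linarith [h2, h3, h4', h5']

end
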